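/- The Fourier transform of the kernel w(x) = (48x(x²−15)cos x − 144(2x²−5)sin x)/(π x⁷) is φ_w(t) = (1−t²)³ for |t| ≤ 1 and 0 otherwise; equivalently, w(x) = (1/2π)∫_{−1}^{1} (1−t²)³ e^{−itx} dt. -/

import Mathlib

open Real Complex intervalIntegral

private lemma polyDeriv (a b d e f g h : ℂ) (z : ℂ) :
    HasDerivAt (fun z : ℂ => a + b * z + d * z ^ 2 + e * z ^ 3 + f * z ^ 4 + g * z ^ 5
      + h * z ^ 6)
      (b + 2 * d * z + 3 * e * z ^ 2 + 4 * f * z ^ 3 + 5 * g * z ^ 4 + 6 * h * z ^ 5) z := by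
  have h0 : HasDerivAt (fun z : ℂ => z) 1 z := hasDerivAt_id z
  have H := (((((((hasDerivAt_const z a).add (h0.const_mul b)).add
      ((hasDerivAt_pow 2 z).const_mul d)).add ((hasDerivAt_pow 3 z).const_mul e)).add
      ((hasDerivAt_pow 4 z).const_mul f)).add ((hasDerivAt_pow 5 z).const_mul g)).add
      ((hasDerivAt_pow 6 z).const_mul h))
  refine H.congr_deriv ?_
  push_cast
  ring

/-- The kernel `w(x) = (48x(x²−15)cos x − 144(2x²−5)sin x)/(π x⁷)` is the inverse
Fourier transform of `t ↦ (1−t²)³ 1_{[−1,1]}(t)`: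
`w(x) = (1/2π) ∫_{−1}^{1} (1−t²)³ e^{−itx} dt` for `x ≠ 0`. -/
theorem wand_kernel_fourier_inversion (x : ℝ) (hx : x ≠ 0) :
    ((48 * x * (x ^ 2 - 15) * Real.cos x - 144 * (2 * x ^ 2 - 5) * Real.sin x) /
        (Real.pi * x ^ 7) : ℂ) =
      (1 / (2 * Real.pi)) *
        ∫ t in (-1 : ℝ)..1, ((1 - t ^ 2) ^ 3 : ℂ) * Complex.exp (-Complex.I * t * x) := by
  set c : ℂ := -Complex.I * x with hc
  have hx' : (x : ℂ) ≠ 0 := Complex.ofReal_ne_zero.mpr hx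
  have hcne : c ≠ 0 := by
    rw [hc]
    exact mul_ne_zero (neg_ne_zero.mpr Complex.I_ne_zero) hx'
  set P : ℂ → ℂ := fun z =>
      ((1 - 3 * z ^ 2 + 3 * z ^ 4 - z ^ 6) * c ^ 6 + (6 * z - 12 * z ^ 3 + 6 * z ^ 5) * c ^ 5
        + (-6 + 36 * z ^ 2 - 30 * z ^ 4) * c ^ 4 + (-72 * z + 120 * z ^ 3) * c ^ 3
        + (72 - 360 * z ^ 2) * c ^ 2 + 720 * z * c - 720) / c ^ 7 with hP
  set F : ℂ → ℂ := fun z => Complex.exp (c * z) * P z with hF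
  have hder : ∀ z : ℂ, HasDerivAt F ((1 - z ^ 2) ^ 3 * Complex.exp (c * z)) z := by
    intro z
    have h1 : HasDerivAt (fun z : ℂ => Complex.exp (c * z)) (c * Complex.exp (c * z)) z := by
      simpa [mul_comm] using ((hasDerivAt_id z).const_mul c).cexp
    have hpoly := polyDeriv (c ^ 6 + (-6 : ℂ) * c ^ 4 + 72 * c ^ 2 - 720)
      (6 * c ^ 5 - 72 * c ^ 3 + 720 * c) (-3 * c ^ 6 + 36 * c ^ 4 - 360 * c ^ 2)
      (-12 * c ^ 5 + 120 * c ^ 3) (3 * c ^ 6 - 30 * c ^ 4) (6 * c ^ 5) (-c ^ 6) z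
    have hfun : (fun z : ℂ => c ^ 6 + (-6 : ℂ) * c ^ 4 + 72 * c ^ 2 - 720
        + (6 * c ^ 5 - 72 * c ^ 3 + 720 * c) * z + (-3 * c ^ 6 + 36 * c ^ 4 - 360 * c ^ 2) * z ^ 2
        + (-12 * c ^ 5 + 120 * c ^ 3) * z ^ 3 + (3 * c ^ 6 - 30 * c ^ 4) * z ^ 4
        + (6 * c ^ 5) * z ^ 5 + (-c ^ 6) * z ^ 6) = fun z : ℂ =>
        ((1 - 3 * z ^ 2 + 3 * z ^ 4 - z ^ 6) * c ^ 6 + (6 * z - 12 * z ^ 3 + 6 * z ^ 5) * c ^ 5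
        + (-6 + 36 * z ^ 2 - 30 * z ^ 4) * c ^ 4 + (-72 * z + 120 * z ^ 3) * c ^ 3
        + (72 - 360 * z ^ 2) * c ^ 2 + 720 * z * c - 720) := by
      funext w; ring
    rw [hfun] at hpoly
    have hPder := hpoly.div_const (c ^ 7)
    have H := h1.mul hPder
    refine H.congr_deriv ?_
    field_simp
    ring
  have hder' : ∀ t ∈ Set.uIcc (-1 : ℝ) 1,
      HasDerivAt (fun t : ℝ => F t)
        ((1 - (t : ℂ) ^ 2) ^ 3 * Complex.exp (-Complex.I * t * x)) t := by
    intro t _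
    have h := (hder t).comp_ofReal
    convert h using 2
    rw [hc]; ring
  have hcont : IntervalIntegrable
      (fun t : ℝ => ((1 - (t : ℂ) ^ 2) ^ 3 : ℂ) * Complex.exp (-Complex.I * t * x))
      MeasureTheory.volume (-1 : ℝ) 1 := by
    apply Continuous.intervalIntegrable
    fun_prop
  have hint := intervalIntegral.integral_eq_sub_of_hasDerivAt hder' hcont
  rw [hint]
  have e1 : Complex.exp (c * (1 : ℝ)) = Real.cos x - Real.sin x * Complex.I := by
    have harg : c * ((1 : ℝ) : ℂ) = ((-x : ℝ) : ℂ) * Complex.I := by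
      rw [hc]; push_cast; ring
    rw [harg, Complex.exp_mul_I]
    push_cast
    simp [Real.cos_neg, Real.sin_neg]
    ring
  have e2 : Complex.exp (c * ((-1 : ℝ) : ℂ)) = Real.cos x + Real.sin x * Complex.I := by
    have harg : c * ((-1 : ℝ) : ℂ) = ((x : ℝ) : ℂ) * Complex.I := by
      rw [hc]; push_cast; ring
    rw [harg, Complex.exp_mul_I]
    push_cast
    rfl
  rw [hF]
  simp only [hP]
  rw [e1, e2]
  have hπ : (Real.pi : ℂ) ≠ 0 := Complex.ofReal_ne_zero.mpr Real.pi_ne_zero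
  have hI2 : Complex.I ^ 2 = -1 := Complex.I_sq
  rw [hc]
  push_cast
  field_simp
  ring_nf
  have hI3 : Complex.I ^ 3 = -Complex.I := by rw [pow_succ, hI2]; ring
  have hI6 : Complex.I ^ 6 = -1 := by rw [show (6 = 2*3) by norm_num, pow_mul, hI2]; ring
  have hI7 : Complex.I ^ 7 = -Complex.I := by rw [pow_succ, hI6]; ring
  have hI4 : Complex.I ^ 4 = 1 := Complex.I_pow_four
  have hI5 : Complex.I ^ 5 = Complex.I := by rw [pow_succ, hI4]; ring
  simp only [hI3, hI4, hI5, hI6, hI7, hI2]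
  ring
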